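/- Let X and Y be finite sets and c : X × Y → ℝ≥0 a bounded cost function with c_max := max_{x,y} c(x,y). Then the optimal transport functional E is uniformly continuous with respect to total variation: for all probability mass functions P_X, Q_X on X and P_Y, Q_Y on Y, |E(P_X, P_Y) − E(Q_X, Q_Y)| ≤ c_max · (‖P_X − Q_X‖_TV + ‖P_Y − Q_Y‖_TV). -/

import Mathlib

open Finset

/-- `p` is a probability mass function on a finite set. -/
def IsPMF {X : Type*} [Fintype X] (p : X → ℝ) : Prop :=
  (∀ x, 0 ≤ p x) ∧ ∑ x, p x = 1

/-- `π` is a coupling of the probability mass functions `pX` and `pY`. -/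
def IsCoupling {X Y : Type*} [Fintype X] [Fintype Y]
    (pX : X → ℝ) (pY : Y → ℝ) (π : X × Y → ℝ) : Prop :=
  IsPMF π ∧ (∀ x, ∑ y, π (x, y) = pX x) ∧ (∀ y, ∑ x, π (x, y) = pY y)

/-- The optimal transport cost between two probability mass functions. -/
noncomputable def OTCost {X Y : Type*} [Fintype X] [Fintype Y]
    (c : X × Y → ℝ) (pX : X → ℝ) (pY : Y → ℝ) : ℝ :=
  sInf {r | ∃ π, IsCoupling pX pY π ∧ r = ∑ z, π z * c z}

lemma sum_prod_mul {X Y : Type*} [Fintype X] [Fintype Y] (f : X → ℝ) (g : Y → ℝ) :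
    ∑ z : X × Y, f z.1 * g z.2 = (∑ x, f x) * (∑ y, g y) := by
  rw [Fintype.sum_prod_type, Finset.sum_mul_sum]

lemma tv_half {X : Type*} [Fintype X] (p q : X → ℝ) (hp : IsPMF p) (hq : IsPMF q) :
    ∑ x, (q x - min (p x) (q x)) = (1/2) * ∑ x, |p x - q x| := by
  have h : ∀ x, q x - min (p x) (q x) = (1/2) * (|p x - q x| + (q x - p x)) := by
    intro x
    rcases le_total (p x) (q x) with h | h
    · rw [min_eq_left h, abs_of_nonpos (by linarith)]; ring
    · rw [min_eq_right h, abs_of_nonneg (by linarith)]; ring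
  simp_rw [h]
  rw [← Finset.mul_sum]
  congr 1
  rw [Finset.sum_add_distrib, Finset.sum_sub_distrib, hp.2, hq.2]
  ring

lemma couple_mod {X Y : Type*} [Fintype X] [Fintype Y]
    (c : X × Y → ℝ) (hc : ∀ z, 0 ≤ c z) (cmax : ℝ) (hcm : ∀ z, c z ≤ cmax)
    (hcm0 : 0 ≤ cmax)
    (pX qX : X → ℝ) (pY qY : Y → ℝ)
    (hpX : IsPMF pX) (hqX : IsPMF qX) (hpY : IsPMF pY) (hqY : IsPMF qY)
    (π : X × Y → ℝ) (hπ : IsCoupling qX qY π) :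
    ∃ π', IsCoupling pX pY π' ∧
      ∑ z, π' z * c z ≤ ∑ z, π z * c z +
        cmax * (∑ x, (qX x - min (pX x) (qX x)) + ∑ y, (qY y - min (pY y) (qY y))) := by
  obtain ⟨⟨hπ0, hπ1⟩, hπX, hπY⟩ := hπ
  set r : X → ℝ := fun x => min (pX x) (qX x) / qX x with hr
  set s : Y → ℝ := fun y => min (pY y) (qY y) / qY y with hs
  have hr0 : ∀ x, 0 ≤ r x := fun x =>
    div_nonneg (le_min (hpX.1 x) (hqX.1 x)) (hqX.1 x)
  have hs0 : ∀ y, 0 ≤ s y := fun y =>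
    div_nonneg (le_min (hpY.1 y) (hqY.1 y)) (hqY.1 y)
  have hr1 : ∀ x, r x ≤ 1 := by
    intro x
    by_cases h : qX x = 0
    · simp [hr, h]
    · exact (div_le_one (lt_of_le_of_ne (hqX.1 x) (Ne.symm h))).2 (min_le_right _ _)
  have hs1 : ∀ y, s y ≤ 1 := by
    intro y
    by_cases h : qY y = 0
    · simp [hs, h]
    · exact (div_le_one (lt_of_le_of_ne (hqY.1 y) (Ne.symm h))).2 (min_le_right _ _)
  have hrq : ∀ x, r x * qX x = min (pX x) (qX x) := by
    intro x
    by_cases h : qX x = 0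
    · simp [hr, h, min_eq_right (hpX.1 x)]
    · exact div_mul_cancel₀ _ h
  have hsq : ∀ y, s y * qY y = min (pY y) (qY y) := by
    intro y
    by_cases h : qY y = 0
    · simp [hs, h, min_eq_right (hpY.1 y)]
    · exact div_mul_cancel₀ _ h
  set π1 : X × Y → ℝ := fun z => π z * r z.1 * s z.2 with hπ1def
  have hπ10 : ∀ z, 0 ≤ π1 z := fun z =>
    mul_nonneg (mul_nonneg (hπ0 z) (hr0 z.1)) (hs0 z.2)
  have hπ1le : ∀ z, π1 z ≤ π z := by
    intro z
    have h1 : 0 ≤ π z * (1 - s z.2) := mul_nonneg (hπ0 z) (by linarith [hs1 z.2])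
    have h2 : 0 ≤ π z * s z.2 * (1 - r z.1) :=
      mul_nonneg (mul_nonneg (hπ0 z) (hs0 z.2)) (by linarith [hr1 z.1])
    show π z * r z.1 * s z.2 ≤ π z
    nlinarith [h1, h2]
  -- row sums of π1
  have hrow : ∀ x, ∑ y, π1 (x, y) ≤ min (pX x) (qX x) := by
    intro x
    have h1 : ∑ y, π1 (x, y) ≤ ∑ y, π (x, y) * r x := by
      apply Finset.sum_le_sum
      intro y _
      show π (x, y) * r x * s y ≤ π (x, y) * r x
      exact mul_le_of_le_one_right (mul_nonneg (hπ0 (x, y)) (hr0 x)) (hs1 y)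
    calc ∑ y, π1 (x, y) ≤ ∑ y, π (x, y) * r x := h1
      _ = (∑ y, π (x, y)) * r x := by rw [Finset.sum_mul]
      _ = r x * qX x := by rw [hπX x]; ring
      _ = min (pX x) (qX x) := hrq x
  have hcol : ∀ y, ∑ x, π1 (x, y) ≤ min (pY y) (qY y) := by
    intro y
    have h1 : ∑ x, π1 (x, y) ≤ ∑ x, π (x, y) * s y := by
      apply Finset.sum_le_sum
      intro x _
      show π (x, y) * r x * s y ≤ π (x, y) * s y
      have := mul_le_mul_of_nonneg_right
        (mul_le_of_le_one_right (hπ0 (x, y)) (hr1 x)) (hs0 y)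
      linarith
    calc ∑ x, π1 (x, y) ≤ ∑ x, π (x, y) * s y := h1
      _ = (∑ x, π (x, y)) * s y := by rw [Finset.sum_mul]
      _ = s y * qY y := by rw [hπY y]; ring
      _ = min (pY y) (qY y) := hsq y
  set aX : X → ℝ := fun x => pX x - ∑ y, π1 (x, y) with haXdef
  set aY : Y → ℝ := fun y => pY y - ∑ x, π1 (x, y) with haYdef
  have haX0 : ∀ x, 0 ≤ aX x := fun x =>
    sub_nonneg.2 ((hrow x).trans (min_le_left _ _))
  have haY0 : ∀ y, 0 ≤ aY y := fun y =>
    sub_nonneg.2 ((hcol y).trans (min_le_left _ _))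
  set m : ℝ := 1 - ∑ z, π1 z with hmdef
  have hmaX : ∑ x, aX x = m := by
    simp only [haXdef, hmdef, Finset.sum_sub_distrib, hpX.2, Fintype.sum_prod_type]
  have hmaY : ∑ y, aY y = m := by
    simp only [haYdef, hmdef, Finset.sum_sub_distrib, hpY.2]
    rw [Fintype.sum_prod_type_right]
  have hm0 : 0 ≤ m := hmaX ▸ Finset.sum_nonneg (fun x _ => haX0 x)
  set π' : X × Y → ℝ := fun z => π1 z + aX z.1 * aY z.2 / m with hπ'def
  have hdeg : m = 0 → (∀ x, aX x = 0) ∧ (∀ y, aY y = 0) := by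
    intro hm
    refine ⟨fun x => ?_, fun y => ?_⟩
    · exact (Finset.sum_eq_zero_iff_of_nonneg (fun x _ => haX0 x)).1
        (hmaX.trans hm) x (Finset.mem_univ x)
    · exact (Finset.sum_eq_zero_iff_of_nonneg (fun y _ => haY0 y)).1
        (hmaY.trans hm) y (Finset.mem_univ y)
  have hπ'0 : ∀ z, 0 ≤ π' z :=
    fun z => add_nonneg (hπ10 z)
      (div_nonneg (mul_nonneg (haX0 z.1) (haY0 z.2)) hm0)
  have hmargX : ∀ x, ∑ y, π' (x, y) = pX x := by
    intro x
    have h : ∑ y, π' (x, y) = ∑ y, π1 (x, y) + aX x * (∑ y, aY y) / m := by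
      simp only [hπ'def, Finset.sum_add_distrib]
      rw [← Finset.sum_div, ← Finset.mul_sum]
    rw [h, hmaY]
    by_cases hm : m = 0
    · have h0 := (hdeg hm).1 x
      have h0' : pX x - ∑ y, π1 (x, y) = 0 := h0
      rw [h0]
      simp
      linarith
    · rw [mul_div_assoc, div_self hm, mul_one]
      show ∑ y, π1 (x, y) + (pX x - ∑ y, π1 (x, y)) = pX x
      ring
  have hmargY : ∀ y, ∑ x, π' (x, y) = pY y := by
    intro y
    have h : ∑ x, π' (x, y) = ∑ x, π1 (x, y) + (∑ x, aX x) * aY y / m := by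
      simp only [hπ'def, Finset.sum_add_distrib]
      rw [← Finset.sum_div, ← Finset.sum_mul]
    rw [h, hmaX]
    by_cases hm : m = 0
    · have h0 := (hdeg hm).2 y
      have h0' : pY y - ∑ x, π1 (x, y) = 0 := h0
      rw [h0]
      simp
      linarith
    · rw [mul_comm m (aY y), mul_div_assoc, div_self hm, mul_one]
      show ∑ x, π1 (x, y) + (pY y - ∑ x, π1 (x, y)) = pY y
      ring
  have hsum' : ∑ z, π' z = 1 := by
    rw [Fintype.sum_prod_type]
    simp only [hmargX]
    exact hpX.2
  refine ⟨π', ⟨⟨hπ'0, hsum'⟩, hmargX, hmargY⟩, ?_⟩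
  -- cost estimate
  have hcost1 : ∑ z, π1 z * c z ≤ ∑ z, π z * c z :=
    Finset.sum_le_sum fun z _ => mul_le_mul_of_nonneg_right (hπ1le z) (hc z)
  have hsum2 : ∑ z : X × Y, aX z.1 * aY z.2 = m * m := by
    rw [sum_prod_mul, hmaX, hmaY]
  have hcost2 : ∑ z, aX z.1 * aY z.2 / m * c z ≤ cmax * m := by
    calc ∑ z, aX z.1 * aY z.2 / m * c z
        ≤ ∑ z, aX z.1 * aY z.2 / m * cmax :=
          Finset.sum_le_sum fun z _ => mul_le_mul_of_nonneg_left (hcm z)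
            (div_nonneg (mul_nonneg (haX0 z.1) (haY0 z.2)) hm0)
      _ = (∑ z : X × Y, aX z.1 * aY z.2) / m * cmax := by
          rw [← Finset.sum_mul, ← Finset.sum_div]
      _ = m * m / m * cmax := by rw [hsum2]
      _ ≤ cmax * m := by
          by_cases hm : m = 0
          · simp [hm]
          · rw [mul_div_assoc, div_self hm, mul_one, mul_comm]
  have hmle : m ≤ ∑ x, (qX x - min (pX x) (qX x)) + ∑ y, (qY y - min (pY y) (qY y)) := by
    have hm1 : m = ∑ z, π z * (1 - r z.1 * s z.2) := by
      have h : ∀ z : X × Y, π z * (1 - r z.1 * s z.2) = π z - π1 z := by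
        intro z; show _ = π z - π z * r z.1 * s z.2; ring
      simp only [h, Finset.sum_sub_distrib, hπ1, hmdef]
    have hm2 : ∑ z, π z * (1 - r z.1 * s z.2)
        ≤ ∑ z, (π z * (1 - r z.1) + π z * (1 - s z.2)) := by
      apply Finset.sum_le_sum
      intro z _
      have h := mul_nonneg (hπ0 z)
        (mul_nonneg (by linarith [hr1 z.1] : (0:ℝ) ≤ 1 - r z.1)
          (by linarith [hs1 z.2] : (0:ℝ) ≤ 1 - s z.2))
      nlinarith [h]
    have hm3 : ∑ z : X × Y, π z * (1 - r z.1) = ∑ x, (qX x - min (pX x) (qX x)) := by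
      rw [Fintype.sum_prod_type]
      apply Finset.sum_congr rfl
      intro x _
      show ∑ y, π (x, y) * (1 - r x) = _
      rw [← Finset.sum_mul, hπX x, ← hrq x]
      ring
    have hm4 : ∑ z : X × Y, π z * (1 - s z.2) = ∑ y, (qY y - min (pY y) (qY y)) := by
      rw [Fintype.sum_prod_type_right]
      apply Finset.sum_congr rfl
      intro y _
      show ∑ x, π (x, y) * (1 - s y) = _
      rw [← Finset.sum_mul, hπY y, ← hsq y]
      ring
    rw [hm1]
    calc ∑ z, π z * (1 - r z.1 * s z.2)
        ≤ ∑ z, (π z * (1 - r z.1) + π z * (1 - s z.2)) := hm2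
      _ = ∑ z : X × Y, π z * (1 - r z.1) + ∑ z : X × Y, π z * (1 - s z.2) :=
          Finset.sum_add_distrib
      _ = _ := by rw [hm3, hm4]
  have hsplit : ∑ z, π' z * c z = ∑ z, π1 z * c z + ∑ z, aX z.1 * aY z.2 / m * c z := by
    simp only [hπ'def, add_mul, Finset.sum_add_distrib]
  rw [hsplit]
  have h5 := mul_le_mul_of_nonneg_left hmle hcm0
  exact le_trans (add_le_add hcost1 hcost2) (by linarith)

lemma OTCost_le {X Y : Type*} [Fintype X] [Fintype Y]
    (c : X × Y → ℝ) (hc : ∀ z, 0 ≤ c z) (cmax : ℝ) (hcm : ∀ z, c z ≤ cmax)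
    (hcm0 : 0 ≤ cmax)
    (pX qX : X → ℝ) (pY qY : Y → ℝ)
    (hpX : IsPMF pX) (hqX : IsPMF qX) (hpY : IsPMF pY) (hqY : IsPMF qY) :
    OTCost c pX pY ≤ OTCost c qX qY +
      cmax * (∑ x, (qX x - min (pX x) (qX x)) + ∑ y, (qY y - min (pY y) (qY y))) := by
  have hprod : ∀ (u : X → ℝ) (v : Y → ℝ), IsPMF u → IsPMF v →
      IsCoupling u v (fun z => u z.1 * v z.2) := by
    intro u v hu hv
    refine ⟨⟨fun z => mul_nonneg (hu.1 z.1) (hv.1 z.2), ?_⟩, fun x => ?_, fun y => ?_⟩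
    · rw [sum_prod_mul, hu.2, hv.2, one_mul]
    · show ∑ y : Y, u x * v y = u x
      rw [← Finset.mul_sum, hv.2, mul_one]
    · show ∑ x : X, u x * v y = v y
      rw [← Finset.sum_mul, hu.2, one_mul]
  have hbdd : BddBelow {t | ∃ π, IsCoupling pX pY π ∧ t = ∑ z, π z * c z} := by
    refine ⟨0, fun t ht => ?_⟩
    obtain ⟨π, hπ, rfl⟩ := ht
    exact Finset.sum_nonneg fun z _ => mul_nonneg (hπ.1.1 z) (hc z)
  have hne : ({t | ∃ π, IsCoupling qX qY π ∧ t = ∑ z, π z * c z}).Nonempty :=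
    ⟨_, ⟨_, hprod qX qY hqX hqY, rfl⟩⟩
  have key : ∀ b ∈ {t | ∃ π, IsCoupling qX qY π ∧ t = ∑ z, π z * c z},
      OTCost c pX pY - cmax * (∑ x, (qX x - min (pX x) (qX x)) +
        ∑ y, (qY y - min (pY y) (qY y))) ≤ b := by
    rintro b ⟨π, hπc, rfl⟩
    obtain ⟨π', hπ'c, hcost⟩ :=
      couple_mod c hc cmax hcm hcm0 pX qX pY qY hpX hqX hpY hqY π hπc
    have h1 : OTCost c pX pY ≤ ∑ z, π' z * c z := csInf_le hbdd ⟨π', hπ'c, rfl⟩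
    linarith
  have := le_csInf hne key
  have hq : OTCost c qX qY = sInf {t | ∃ π, IsCoupling qX qY π ∧ t = ∑ z, π z * c z} := rfl
  linarith [hq ▸ this]

/-- with `c_max := max_{x,y} c(x,y)`, the OT functional is uniformly
continuous in total variation:
`|E(P_X,P_Y) − E(Q_X,Q_Y)| ≤ c_max (‖P_X − Q_X‖_TV + ‖P_Y − Q_Y‖_TV)`. -/
theorem stmt5 {X Y : Type*} [Fintype X] [Fintype Y] [Nonempty X] [Nonempty Y]
    (c : X × Y → ℝ) (hc : ∀ z, 0 ≤ c z)
    (cmax : ℝ) (hcmax : cmax = ⨆ z : X × Y, c z)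
    (pX qX : X → ℝ) (pY qY : Y → ℝ)
    (hpX : IsPMF pX) (hqX : IsPMF qX) (hpY : IsPMF pY) (hqY : IsPMF qY) :
    |OTCost c pX pY - OTCost c qX qY| ≤
      cmax * ((1 / 2) * ∑ x, |pX x - qX x| + (1 / 2) * ∑ y, |pY y - qY y|) := by
  have hcm : ∀ z, c z ≤ cmax := by
    intro z
    rw [hcmax]
    exact le_ciSup (Set.Finite.bddAbove (Set.finite_range c)) z
  have hcm0 : 0 ≤ cmax := le_trans (hc (Classical.arbitrary _)) (hcm _)
  have h1 := OTCost_le c hc cmax hcm hcm0 pX qX pY qY hpX hqX hpY hqY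
  have h2 := OTCost_le c hc cmax hcm hcm0 qX pX qY pY hqX hpX hqY hpY
  rw [tv_half pX qX hpX hqX, tv_half pY qY hpY hqY] at h1
  rw [tv_half qX pX hqX hpX, tv_half qY pY hqY hpY] at h2
  simp_rw [abs_sub_comm (qX _) (pX _), abs_sub_comm (qY _) (pY _)] at h2
  rw [abs_sub_le_iff]
  constructor <;> linarith
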